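/- arXiv:1312.2991 — 2 statements merged into one kernel-verified Lean document; each statement's English description precedes it below -/
import Mathlib

section
/- (Bol's identity) Let r be a nonnegative integer, let γ = [[a,b],[c,d]] ∈ SL(2,ℂ), let z₀ ∈ ℂ with c z₀ + d ≠ 0, and let F be a complex function analytic in a neighborhood of γ·z₀ = (a z₀ + b)/(c z₀ + d). Then the (r+1)-st derivative of the function w ↦ (cw+d)^r · F((aw+b)/(cw+d)) at z₀ equals (c z₀ + d)^{−(r+2)} · F^{(r+1)}(γ·z₀). -/
open Finset

noncomputable def bolA (r k j : ℕ) : ℂ :=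
  (k.choose j : ℂ) * ∏ i ∈ Finset.range (k - j), ((r : ℂ) - j - i)

lemma bolA_self (r k : ℕ) : bolA r k k = 1 := by simp [bolA]

lemma bolA_gt (r : ℕ) {k j : ℕ} (h : k < j) : bolA r k j = 0 := by
  simp [bolA, Nat.choose_eq_zero_of_lt h]

lemma bolA_rec0 (r k : ℕ) : bolA r (k+1) 0 = ((r : ℂ) - k) * bolA r k 0 := by
  simp only [bolA, Nat.choose_zero_right, Nat.cast_one, one_mul, Nat.sub_zero,
    Finset.prod_range_succ, Nat.cast_zero]
  ring

lemma bolA_rec (r : ℕ) {k j : ℕ} (h : j ≤ k) :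
    bolA r (k+1) (j+1) = ((r : ℂ) - k - (j+1)) * bolA r k (j+1) + bolA r k j := by
  rcases eq_or_lt_of_le h with rfl | hlt
  · rw [bolA_self, bolA_self, bolA_gt r (Nat.lt_succ_self _)]; ring
  · obtain ⟨m, hm⟩ : ∃ m, k = j + m + 1 := ⟨k - j - 1, by omega⟩
    subst hm
    have h1 : (j + m + 1 + 1) - (j + 1) = m + 1 := by omega
    have h2 : (j + m + 1) - (j + 1) = m := by omega
    have h3 : (j + m + 1) - j = m + 1 := by omega
    rw [bolA, bolA, bolA, h1, h2, h3]
    have e1 : ∏ i ∈ Finset.range (m+1), ((r:ℂ) - ((j:ℕ)+1 : ℕ) - i)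
        = (∏ i ∈ Finset.range m, ((r:ℂ) - ((j:ℕ)+1 : ℕ) - i)) * ((r:ℂ) - (j + m + 1 : ℕ)) := by
      rw [Finset.prod_range_succ]; push_cast; ring
    have e2 : ∏ i ∈ Finset.range (m+1), ((r:ℂ) - j - i)
        = (∏ i ∈ Finset.range m, ((r:ℂ) - ((j:ℕ)+1 : ℕ) - i)) * ((r:ℂ) - j) := by
      rw [Finset.prod_range_succ']
      congr 1
      · apply Finset.prod_congr rfl; intro i _; push_cast; ring
      · push_cast; ring
    rw [e1, e2]
    have hp : (((j+m+1+1).choose (j+1) : ℕ) : ℂ)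
        = ((j+m+1).choose j : ℕ) + ((j+m+1).choose (j+1) : ℕ) := by
      rw [Nat.choose_succ_succ]; push_cast; ring
    have hq' := Nat.choose_succ_right_eq (j+m+1) j
    have hq : (((j+m+1).choose (j+1) : ℕ) : ℂ) * (j+1)
        = ((j+m+1).choose j : ℕ) * (((j+m+1) - j : ℕ) : ℂ) := by exact_mod_cast hq'
    rw [Nat.cast_sub (by omega)] at hq
    set Q := ∏ i ∈ Finset.range m, ((r:ℂ) - ((j:ℕ)+1 : ℕ) - i) with hQ
    push_cast at hp hq ⊢
    linear_combination (((r:ℂ) - j - m - 1) * Q) * hp + Q * hq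

lemma bolA_top (r : ℕ) {j : ℕ} (h : j ≤ r) : bolA r (r+1) j = 0 := by
  have hmem : r - j ∈ Finset.range (r + 1 - j) := by
    rw [Finset.mem_range]; omega
  rw [bolA, Finset.prod_eq_zero hmem]
  · ring
  · have : ((r - j : ℕ) : ℂ) = (r : ℂ) - j := by rw [Nat.cast_sub h]
    rw [this]; ring

lemma analyticAt_deriv' {f : ℂ → ℂ} {x : ℂ} (h : AnalyticAt ℂ f x) :
    AnalyticAt ℂ (deriv f) x :=
  ((ContinuousLinearMap.apply ℂ ℂ (1:ℂ)).analyticAt _).comp h.fderiv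

lemma analyticAt_iteratedDeriv' {f : ℂ → ℂ} {x : ℂ} (h : AnalyticAt ℂ f x) (n : ℕ) :
    AnalyticAt ℂ (iteratedDeriv n f) x := by
  induction n with
  | zero => simpa using h
  | succ n ih => rw [iteratedDeriv_succ]; exact analyticAt_deriv' ih

lemma hasDerivAt_iteratedDeriv' {f : ℂ → ℂ} {x : ℂ} (h : AnalyticAt ℂ f x) (n : ℕ) :
    HasDerivAt (iteratedDeriv n f) (iteratedDeriv (n+1) f x) x := by
  have := ((analyticAt_iteratedDeriv' h n).differentiableAt).hasDerivAt
  rwa [← iteratedDeriv_succ] at this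

lemma hasDerivAt_affine' (c d z : ℂ) : HasDerivAt (fun w => c * w + d) c z := by
  simpa using ((hasDerivAt_id z).const_mul c).add_const d

lemma hasDerivAt_moebius {a b c d : ℂ} (hdet : a * d - b * c = 1) {z : ℂ}
    (hz : c * z + d ≠ 0) :
    HasDerivAt (fun w => (a * w + b) / (c * w + d)) ((c * z + d) ^ (-2 : ℤ)) z := by
  have h := (hasDerivAt_affine' a b z).fun_div (hasDerivAt_affine' c d z) hz
  refine h.congr_deriv ?_
  symm
  have hnum : a * (c * z + d) - (a * z + b) * c = 1 := by linear_combination hdet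
  rw [hnum, zpow_neg]
  norm_num

lemma hasDerivAt_affine_zpow (m : ℤ) {c d z : ℂ} (hz : c * z + d ≠ 0) :
    HasDerivAt (fun w => (c * w + d) ^ m) ((m : ℂ) * c * (c * z + d) ^ (m - 1)) z := by
  have h := (hasDerivAt_zpow m (c * z + d) (Or.inl hz)).comp z (hasDerivAt_affine' c d z)
  refine h.congr_deriv ?_
  ring

lemma bol_term_hasDerivAt (r k j : ℕ) {a b c d : ℂ} (hdet : a * d - b * c = 1) {z : ℂ}
    (hz : c * z + d ≠ 0) {F : ℂ → ℂ} (hFz : AnalyticAt ℂ F ((a * z + b) / (c * z + d))) :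
    HasDerivAt
      (fun w => (c * w + d) ^ ((r:ℤ) - k - j) * iteratedDeriv j F ((a * w + b) / (c * w + d)))
      ((((r:ℤ) - k - j : ℤ) : ℂ) * c * (c * z + d) ^ ((r:ℤ) - k - j - 1)
          * iteratedDeriv j F ((a * z + b) / (c * z + d))
        + (c * z + d) ^ ((r:ℤ) - k - j)
          * (iteratedDeriv (j+1) F ((a * z + b) / (c * z + d)) * (c * z + d) ^ (-2 : ℤ))) z := by
  have h1 := hasDerivAt_affine_zpow ((r:ℤ) - k - j) hz
  have h2 : HasDerivAt (fun w => iteratedDeriv j F ((a * w + b) / (c * w + d)))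
      (iteratedDeriv (j+1) F ((a * z + b) / (c * z + d)) * (c * z + d) ^ (-2 : ℤ)) z :=
    by have := (hasDerivAt_iteratedDeriv' hFz j).comp z (hasDerivAt_moebius hdet hz); exact this
  exact h1.mul h2

lemma bol_sum_step (r k : ℕ) (c t : ℂ) (ht : t ≠ 0) (G : ℕ → ℂ) :
    ∑ j ∈ Finset.range (k+1), bolA r k j * c ^ (k-j) *
      ((((r:ℤ) - k - j : ℤ) : ℂ) * c * t ^ ((r:ℤ) - k - j - 1) * G j
        + t ^ ((r:ℤ) - k - j) * (G (j+1) * t ^ (-2 : ℤ)))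
    = ∑ j ∈ Finset.range (k+1+1), bolA r (k+1) j * c ^ (k+1-j) *
        (t ^ ((r:ℤ) - (k+1:ℕ) - j) * G j) := by
  have key : ∀ j ∈ Finset.range (k+1),
      bolA r k j * c ^ (k-j) *
      ((((r:ℤ) - k - j : ℤ) : ℂ) * c * t ^ ((r:ℤ) - k - j - 1) * G j
        + t ^ ((r:ℤ) - k - j) * (G (j+1) * t ^ (-2 : ℤ)))
      = (((r:ℂ) - k - j) * bolA r k j) * (c ^ (k+1-j) * (t ^ ((r:ℤ) - (k+1:ℕ) - j) * G j))
        + bolA r k j * (c ^ (k-j) * (t ^ ((r:ℤ) - (k+1:ℕ) - ((j+1:ℕ):ℤ)) * G (j+1))) := by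
    intro j hj
    have hjk : j ≤ k := by simpa [Nat.lt_succ_iff] using Finset.mem_range.mp hj
    have e0 : (r:ℤ) - k - j - 1 = ((r:ℤ) - k - j) + (-1) := by ring
    have e1 : (r:ℤ) - ((k+1:ℕ):ℤ) - j = ((r:ℤ) - k - j) + (-1) := by push_cast; ring
    have e2 : (r:ℤ) - ((k+1:ℕ):ℤ) - ((j+1:ℕ):ℤ) = ((r:ℤ) - k - j) + (-2) := by push_cast; ring
    have e3 : k+1-j = (k-j)+1 := by omega
    rw [e0, e1, e2, e3, zpow_add₀ ht, zpow_add₀ ht, pow_succ]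
    push_cast
    ring
  rw [Finset.sum_congr rfl key, Finset.sum_add_distrib]
  have hs1 : ∑ j ∈ Finset.range (k+1),
      (((r:ℂ) - k - j) * bolA r k j) * (c ^ (k+1-j) * (t ^ ((r:ℤ) - (k+1:ℕ) - j) * G j))
      = bolA r (k+1) 0 * (c ^ (k+1-0) * (t ^ ((r:ℤ) - (k+1:ℕ) - (0:ℕ)) * G 0))
        + ∑ j ∈ Finset.range (k+1),
          (((r:ℂ) - k - (j+1)) * bolA r k (j+1))
            * (c ^ (k+1-(j+1)) * (t ^ ((r:ℤ) - (k+1:ℕ) - ((j+1:ℕ):ℤ)) * G (j+1))) := by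
    rw [Finset.sum_range_succ' (fun j =>
      (((r:ℂ) - k - j) * bolA r k j) * (c ^ (k+1-j) * (t ^ ((r:ℤ) - (k+1:ℕ) - j) * G j))) k]
    rw [Finset.sum_range_succ (fun j =>
      (((r:ℂ) - k - (j+1)) * bolA r k (j+1))
        * (c ^ (k+1-(j+1)) * (t ^ ((r:ℤ) - (k+1:ℕ) - ((j+1:ℕ):ℤ)) * G (j+1)))) k]
    rw [bolA_gt r (Nat.lt_succ_self k), bolA_rec0]
    push_cast
    ring
  rw [hs1]
  rw [Finset.sum_range_succ' (fun j => bolA r (k+1) j * c ^ (k+1-j) *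
        (t ^ ((r:ℤ) - (k+1:ℕ) - j) * G j)) (k+1)]
  have hterm : ∀ j ∈ Finset.range (k+1),
      bolA r (k+1) (j+1) * c ^ (k+1-(j+1)) * (t ^ ((r:ℤ) - (k+1:ℕ) - ((j+1:ℕ):ℤ)) * G (j+1))
      = (((r:ℂ) - k - (j+1)) * bolA r k (j+1))
          * (c ^ (k+1-(j+1)) * (t ^ ((r:ℤ) - (k+1:ℕ) - ((j+1:ℕ):ℤ)) * G (j+1)))
        + bolA r k j * (c ^ (k+1-(j+1)) * (t ^ ((r:ℤ) - (k+1:ℕ) - ((j+1:ℕ):ℤ)) * G (j+1))) := by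
    intro j hj
    have hjk : j ≤ k := by simpa [Nat.lt_succ_iff] using Finset.mem_range.mp hj
    rw [bolA_rec r hjk]
    push_cast
    ring
  rw [Finset.sum_congr rfl hterm, Finset.sum_add_distrib]
  have e4 : ∀ j : ℕ, k+1-(j+1) = k-j := fun j => by omega
  simp only [e4, Nat.sub_zero, Nat.cast_zero, Nat.cast_add, Nat.cast_one]
  ring

/-- Bol's identity: for `γ = [[a,b],[c,d]] ∈ SL(2,ℂ)` and `F` analytic near `γ·z₀`,
`(F|₋ᵣγ)^{(r+1)}(z₀) = (cz₀+d)^{-(r+2)} F^{(r+1)}(γ·z₀)`. -/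
theorem bol_identity (r : ℕ) (a b c d : ℂ) (hdet : a * d - b * c = 1)
    (z₀ : ℂ) (hden : c * z₀ + d ≠ 0) (F : ℂ → ℂ)
    (hF : AnalyticAt ℂ F ((a * z₀ + b) / (c * z₀ + d))) :
    iteratedDeriv (r + 1) (fun w => (c * w + d) ^ r * F ((a * w + b) / (c * w + d))) z₀ =
      (c * z₀ + d) ^ (-(r + 2 : ℤ)) *
        iteratedDeriv (r + 1) F ((a * z₀ + b) / (c * z₀ + d)) := by
  -- eventual good set
  have hcont : ContinuousAt (fun z => (a * z + b) / (c * z + d)) z₀ := by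
    apply ContinuousAt.div
    · fun_prop
    · fun_prop
    · exact hden
  have hev : ∀ᶠ z in nhds z₀, c * z + d ≠ 0 ∧
      AnalyticAt ℂ F ((a * z + b) / (c * z + d)) := by
    have h1 : ∀ᶠ z in nhds z₀, c * z + d ≠ 0 := by
      have : ContinuousAt (fun z => c * z + d) z₀ := by fun_prop
      exact this.eventually_ne hden
    have h2 : ∀ᶠ z in nhds z₀, AnalyticAt ℂ F ((a * z + b) / (c * z + d)) :=
      hcont.tendsto.eventually hF.eventually_analyticAt
    exact h1.and h2
  -- the key induction
  have key : ∀ k : ℕ,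
      (fun z => iteratedDeriv k (fun w => (c * w + d) ^ r * F ((a * w + b) / (c * w + d))) z)
      =ᶠ[nhds z₀] (fun z => ∑ j ∈ Finset.range (k+1),
        bolA r k j * c ^ (k-j) *
          ((c * z + d) ^ ((r:ℤ) - k - j) * iteratedDeriv j F ((a * z + b) / (c * z + d)))) := by
    intro k
    induction k with
    | zero =>
      filter_upwards with z
      rw [Finset.sum_range_succ, Finset.sum_range_zero, zero_add]
      simp only [iteratedDeriv_zero, bolA_self, Nat.sub_zero, Nat.cast_zero, pow_zero,
        one_mul, sub_zero]
      rw [zpow_natCast]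
    | succ k ih =>
      have ihd := ih.deriv
      filter_upwards [ihd, hev] with z hz hz2
      obtain ⟨ht, hA⟩ := hz2
      simp only [iteratedDeriv_succ]
      rw [hz]
      have hder : HasDerivAt
          (fun z => ∑ j ∈ Finset.range (k+1),
            bolA r k j * c ^ (k-j) *
              ((c * z + d) ^ ((r:ℤ) - k - j) * iteratedDeriv j F ((a * z + b) / (c * z + d))))
          (∑ j ∈ Finset.range (k+1),
            bolA r k j * c ^ (k-j) *
              ((((r:ℤ) - k - j : ℤ) : ℂ) * c * (c * z + d) ^ ((r:ℤ) - k - j - 1)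
                  * iteratedDeriv j F ((a * z + b) / (c * z + d))
                + (c * z + d) ^ ((r:ℤ) - k - j)
                  * (iteratedDeriv (j+1) F ((a * z + b) / (c * z + d))
                    * (c * z + d) ^ (-2 : ℤ)))) z := by
        apply HasDerivAt.fun_sum
        intro j _
        exact (bol_term_hasDerivAt r k j hdet ht hA).const_mul _
      rw [hder.deriv]
      exact bol_sum_step r k c (c * z + d) ht
        (fun j => iteratedDeriv j F ((a * z + b) / (c * z + d)))
  -- finish: evaluate at k = r+1, z = z₀
  have hfin := (key (r+1)).eq_of_nhds
  rw [hfin]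
  rw [Finset.sum_eq_single_of_mem (r+1) (by simp)]
  · rw [bolA_self]
    have : (r:ℤ) - ((r+1:ℕ):ℤ) - ((r+1:ℕ):ℤ) = -(r + 2 : ℤ) := by push_cast; ring
    rw [this]
    simp
  · intro j hj hne
    have hjr : j ≤ r := by
      have := Finset.mem_range.mp hj
      omega
    rw [bolA_top r hjr]
    ring
end

section
/- Let Γ be a subgroup of SL(2,ℝ), r a nonnegative integer, D an open subset of ℍ stable under the action of Γ, and g an analytic function on D satisfying g(γ·z) = (cz+d)^{2(r+1)} g(z) for all γ = [[a,b],[c,d]] ∈ Γ and z ∈ D. Let V_r(D) be the ℂ-vector space of analytic functions f on D with f^{(r+1)} + g f = 0 on D. Then for each γ ∈ Γ, the map ρ_r(γ) : f ↦ f|_{−r}γ⁻¹ is a ℂ-linear bijection of V_r(D) onto itself, and γ ↦ ρ_r(γ) is a group homomorphism: ρ_r(γ₁γ₂) = ρ_r(γ₁) ∘ ρ_r(γ₂) for all γ₁, γ₂ ∈ Γ. -/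
/-- The automorphy factor `cz + d` for `γ = [[a,b],[c,d]] ∈ SL(2,ℝ)`. -/
noncomputable def jfac (γ : Matrix.SpecialLinearGroup (Fin 2) ℝ) (z : ℂ) : ℂ :=
  (((γ : Matrix (Fin 2) (Fin 2) ℝ) 1 0 : ℝ) : ℂ) * z +
    (((γ : Matrix (Fin 2) (Fin 2) ℝ) 1 1 : ℝ) : ℂ)

/-- The Möbius action `γ·z = (az+b)/(cz+d)` of `γ ∈ SL(2,ℝ)` on `z ∈ ℂ`. -/
noncomputable def moebius (γ : Matrix.SpecialLinearGroup (Fin 2) ℝ) (z : ℂ) : ℂ :=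
  ((((γ : Matrix (Fin 2) (Fin 2) ℝ) 0 0 : ℝ) : ℂ) * z +
    (((γ : Matrix (Fin 2) (Fin 2) ℝ) 0 1 : ℝ) : ℂ)) / jfac γ z

/-- The weight `-r` slash operator: `f|₋ᵣγ (z) = (cz+d)^r f(γ·z)`. -/
noncomputable def slashNegWt (r : ℕ) (γ : Matrix.SpecialLinearGroup (Fin 2) ℝ)
    (f : ℂ → ℂ) (z : ℂ) : ℂ :=
  (jfac γ z) ^ r * f (moebius γ z)

/-- Membership in the solution space `V_r(D)` of `f^{(r+1)} + g f = 0`. -/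
def MemSolSpace (r : ℕ) (D : Set ℂ) (g f : ℂ → ℂ) : Prop :=
  AnalyticOnNhd ℂ f D ∧ ∀ z ∈ D, iteratedDeriv (r + 1) f z + g z * f z = 0

abbrev SL2 := Matrix.SpecialLinearGroup (Fin 2) ℝ

lemma det_fact (δ : SL2) :
    ((δ : Matrix (Fin 2) (Fin 2) ℝ) 0 0) * ((δ : Matrix (Fin 2) (Fin 2) ℝ) 1 1)
      - ((δ : Matrix (Fin 2) (Fin 2) ℝ) 0 1) * ((δ : Matrix (Fin 2) (Fin 2) ℝ) 1 0) = 1 := by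
  have h := δ.2
  rwa [Matrix.det_fin_two] at h

lemma jfac_ne_zero (δ : SL2) {z : ℂ} (hz : 0 < z.im) : jfac δ z ≠ 0 := by
  intro h
  have him : ((δ : Matrix (Fin 2) (Fin 2) ℝ) 1 0 : ℝ) * z.im = 0 := by
    have := congrArg Complex.im h
    simpa [jfac] using this
  have hc : ((δ : Matrix (Fin 2) (Fin 2) ℝ) 1 0 : ℝ) = 0 := by
    rcases mul_eq_zero.1 him with h' | h'
    · exact h'
    · exact absurd h' (ne_of_gt hz)
  have hre := congrArg Complex.re h
  simp [jfac, hc] at hre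
  have := det_fact δ
  rw [hc, hre] at this
  simp at this

lemma mul_entry (δ₁ δ₂ : SL2) (i j : Fin 2) :
    ((δ₁ * δ₂ : SL2) : Matrix (Fin 2) (Fin 2) ℝ) i j =
      (δ₁ : Matrix (Fin 2) (Fin 2) ℝ) i 0 * (δ₂ : Matrix (Fin 2) (Fin 2) ℝ) 0 j +
      (δ₁ : Matrix (Fin 2) (Fin 2) ℝ) i 1 * (δ₂ : Matrix (Fin 2) (Fin 2) ℝ) 1 j := by
  simp [Matrix.SpecialLinearGroup.coe_mul, Matrix.mul_apply, Fin.sum_univ_two]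

lemma jfac_one (z : ℂ) : jfac 1 z = 1 := by
  simp [jfac, Matrix.SpecialLinearGroup.coe_one]

lemma moebius_one (z : ℂ) : moebius 1 z = z := by
  simp [moebius, jfac_one, Matrix.SpecialLinearGroup.coe_one]

lemma jfac_mul (δ₁ δ₂ : SL2) (z : ℂ) (h : jfac δ₂ z ≠ 0) :
    jfac (δ₁ * δ₂) z = jfac δ₁ (moebius δ₂ z) * jfac δ₂ z := by
  simp only [jfac] at h
  simp only [jfac, moebius, mul_entry]
  rw [mul_div_assoc', div_add' _ _ _ h, div_mul_cancel₀ _ h]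
  push_cast
  ring

lemma moebius_mul (δ₁ δ₂ : SL2) (z : ℂ) (h : jfac δ₂ z ≠ 0) :
    moebius (δ₁ * δ₂) z = moebius δ₁ (moebius δ₂ z) := by
  have hnum : (((δ₁ : Matrix (Fin 2) (Fin 2) ℝ) 0 0 : ℝ) : ℂ) * moebius δ₂ z +
      (((δ₁ : Matrix (Fin 2) (Fin 2) ℝ) 0 1 : ℝ) : ℂ) =
      ((((δ₁*δ₂ : SL2) : Matrix (Fin 2) (Fin 2) ℝ) 0 0 : ℝ) * z +
        (((δ₁*δ₂ : SL2) : Matrix (Fin 2) (Fin 2) ℝ) 0 1 : ℝ)) / jfac δ₂ z := by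
    simp only [jfac] at h
    simp only [jfac, moebius, mul_entry]
    rw [mul_div_assoc', div_add' _ _ _ h]
    push_cast
    ring
  have hden : jfac δ₁ (moebius δ₂ z) = jfac (δ₁*δ₂) z / jfac δ₂ z := by
    simp only [jfac] at h
    simp only [jfac, moebius, mul_entry]
    rw [mul_div_assoc', div_add' _ _ _ h]
    push_cast
    ring
  conv_rhs => rw [moebius, hnum, hden]
  rw [div_div_div_cancel_right₀ h]
  rfl

lemma jfac_hasDerivAt (δ : SL2) (z : ℂ) :
    HasDerivAt (jfac δ) (((δ : Matrix (Fin 2) (Fin 2) ℝ) 1 0 : ℝ) : ℂ) z := by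
  unfold jfac
  simpa only [mul_one, id_eq] using ((hasDerivAt_id z).const_mul
    ((((δ : Matrix (Fin 2) (Fin 2) ℝ) 1 0 : ℝ)) : ℂ)).add_const
      ((((δ : Matrix (Fin 2) (Fin 2) ℝ) 1 1 : ℝ)) : ℂ)

lemma moebius_hasDerivAt (δ : SL2) {z : ℂ} (h : jfac δ z ≠ 0) :
    HasDerivAt (moebius δ) ((jfac δ z) ^ (-2 : ℤ)) z := by
  have h1 : HasDerivAt (fun w => ((((δ : Matrix (Fin 2) (Fin 2) ℝ) 0 0 : ℝ)) : ℂ) * w +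
      ((((δ : Matrix (Fin 2) (Fin 2) ℝ) 0 1 : ℝ)) : ℂ))
      ((((δ : Matrix (Fin 2) (Fin 2) ℝ) 0 0 : ℝ)) : ℂ) z := by
    simpa using ((hasDerivAt_id z).const_mul
      ((((δ : Matrix (Fin 2) (Fin 2) ℝ) 0 0 : ℝ)) : ℂ)).add_const ((((δ : Matrix (Fin 2) (Fin 2) ℝ) 0 1 : ℝ)) : ℂ)
  have h2 := jfac_hasDerivAt δ z
  have h3 := h1.div h2 h
  have hdet : ((((δ : Matrix (Fin 2) (Fin 2) ℝ) 0 0 : ℝ)) : ℂ) * jfac δ z -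
      (((((δ : Matrix (Fin 2) (Fin 2) ℝ) 0 0 : ℝ)) : ℂ) * z +
        ((((δ : Matrix (Fin 2) (Fin 2) ℝ) 0 1 : ℝ)) : ℂ)) *
        ((((δ : Matrix (Fin 2) (Fin 2) ℝ) 1 0 : ℝ)) : ℂ) = 1 := by
    have dc := det_fact δ
    have dcC : ((((δ : Matrix (Fin 2) (Fin 2) ℝ) 0 0 : ℝ)) : ℂ) *
        ((((δ : Matrix (Fin 2) (Fin 2) ℝ) 1 1 : ℝ)) : ℂ) -
        ((((δ : Matrix (Fin 2) (Fin 2) ℝ) 0 1 : ℝ)) : ℂ) *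
        ((((δ : Matrix (Fin 2) (Fin 2) ℝ) 1 0 : ℝ)) : ℂ) = 1 := by
      exact_mod_cast congrArg (Complex.ofReal) dc
    simp only [jfac]
    linear_combination dcC
  have hval : (jfac δ z) ^ (-2 : ℤ) =
      (((((δ : Matrix (Fin 2) (Fin 2) ℝ) 0 0 : ℝ)) : ℂ) * jfac δ z -
        (((((δ : Matrix (Fin 2) (Fin 2) ℝ) 0 0 : ℝ)) : ℂ) * z +
          ((((δ : Matrix (Fin 2) (Fin 2) ℝ) 0 1 : ℝ)) : ℂ)) *
          ((((δ : Matrix (Fin 2) (Fin 2) ℝ) 1 0 : ℝ)) : ℂ)) / (jfac δ z) ^ 2 := by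
    rw [hdet, zpow_neg, ← one_div]
    norm_cast
  rw [hval]
  exact h3

lemma coeff_rec (x : ℂ) (n j : ℕ) (hj : j ≤ n) :
    (((n+1).choose (j+1) : ℕ) : ℂ) * ∏ i ∈ Finset.Ico (j+1) (n+1), (x - (i:ℂ))
      = (x - n - (j+1)) * (((n.choose (j+1) : ℕ) : ℂ) * ∏ i ∈ Finset.Ico (j+1) n, (x - (i:ℂ)))
        + ((n.choose j : ℕ) : ℂ) * ∏ i ∈ Finset.Ico j n, (x - (i:ℂ)) := by
  rcases lt_or_eq_of_le hj with hlt | rfl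
  · rw [Finset.prod_Ico_succ_top hlt, Finset.prod_eq_prod_Ico_succ_bot hlt]
    have pascal : (((n+1).choose (j+1) : ℕ) : ℂ) =
        ((n.choose j : ℕ) : ℂ) + ((n.choose (j+1) : ℕ) : ℂ) := by
      exact_mod_cast congrArg (Nat.cast (R := ℂ)) (Nat.choose_succ_succ (n) (j))
    have key : ((n.choose (j+1) : ℕ) : ℂ) * ((j:ℂ)+1) = ((n.choose j : ℕ) : ℂ) * ((n:ℂ) - j) := by
      have h := Nat.choose_succ_right_eq n j
      have : (((n.choose (j+1)) * (j+1) : ℕ) : ℂ) = (((n.choose j) * (n - j) : ℕ) : ℂ) := by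
        exact_mod_cast congrArg (Nat.cast (R := ℂ)) h
      push_cast [Nat.cast_sub hj] at this
      exact this
    linear_combination ((∏ k ∈ Finset.Ico (j+1) n, (x - (k:ℂ))) * (x - (n:ℂ))) * pascal
      + (∏ k ∈ Finset.Ico (j+1) n, (x - (k:ℂ))) * key
  · simp [Nat.choose_succ_self, Nat.choose_self, Finset.Ico_self]

noncomputable def bolK (r n j : ℕ) : ℂ :=
  ((n.choose j : ℕ) : ℂ) * ∏ i ∈ Finset.Ico j n, ((r : ℂ) - (i:ℂ))

lemma bolK_rec (r n j : ℕ) (hj : j ≤ n) :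
    bolK r (n+1) (j+1) = ((r:ℂ) - n - (j+1)) * bolK r n (j+1) + bolK r n j := by
  simpa [bolK, mul_assoc] using coeff_rec (r:ℂ) n j hj

lemma bolK_zero_rec (r n : ℕ) :
    bolK r (n+1) 0 = ((r:ℂ) - n - 0) * bolK r n 0 := by
  rw [bolK, bolK, Finset.prod_Ico_succ_top (Nat.zero_le n)]
  simp only [Nat.choose_zero_right, Nat.cast_one, one_mul]
  ring

lemma bolK_top (r n : ℕ) : bolK r n (n+1) = 0 := by
  simp [bolK, Nat.choose_succ_self]

lemma bol_formula (r : ℕ) (δ : SL2) (F : ℂ → ℂ) (U V : Set ℂ) (hU : IsOpen U)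
    (hJ : ∀ z ∈ U, jfac δ z ≠ 0) (hmap : ∀ z ∈ U, moebius δ z ∈ V)
    (hF : AnalyticOnNhd ℂ F V) :
    ∀ n : ℕ, ∀ z ∈ U, iteratedDeriv n (fun w => (jfac δ w) ^ r * F (moebius δ w)) z =
      ∑ j ∈ Finset.range (n+1),
        bolK r n j * ((((δ : Matrix (Fin 2) (Fin 2) ℝ) 1 0 : ℝ) : ℂ)) ^ (n - j) *
          (jfac δ z) ^ ((r : ℤ) - (n:ℤ) - (j:ℤ)) * iteratedDeriv j F (moebius δ z) := by
  intro n
  induction n with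
  | zero =>
    intro z hz
    simp [bolK, zpow_natCast]
  | succ n IH =>
    intro z hz
    have hJz := hJ z hz
    have hwz := hmap z hz
    have hFder : ∀ j : ℕ, HasDerivAt (fun w => iteratedDeriv j F (moebius δ w))
        (iteratedDeriv (j+1) F (moebius δ z) * (jfac δ z) ^ (-2 : ℤ)) z := by
      intro j
      have ha : AnalyticAt ℂ (iteratedDeriv j F) (moebius δ z) := by
        rw [iteratedDeriv_eq_iterate]
        exact hF.iterated_deriv j _ hwz
      have hd : HasDerivAt (iteratedDeriv j F)
          (iteratedDeriv (j+1) F (moebius δ z)) (moebius δ z) := by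
        have := ha.differentiableAt.hasDerivAt
        rwa [← iteratedDeriv_succ] at this
      exact hd.comp z (moebius_hasDerivAt δ hJz)
    have hterm : ∀ j ∈ Finset.range (n+1),
        HasDerivAt (fun w => bolK r n j * ((((δ : Matrix (Fin 2) (Fin 2) ℝ) 1 0 : ℝ) : ℂ)) ^ (n - j) *
            (jfac δ w) ^ ((r:ℤ) - (n:ℤ) - (j:ℤ)) * iteratedDeriv j F (moebius δ w))
          ( ((r:ℂ) - n - j) * bolK r n j *
              (((((δ : Matrix (Fin 2) (Fin 2) ℝ) 1 0 : ℝ) : ℂ)) ^ (n+1-j) *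
                (jfac δ z) ^ ((r:ℤ) - (n:ℤ) - 1 - (j:ℤ)) * iteratedDeriv j F (moebius δ z))
            + bolK r n j *
              (((((δ : Matrix (Fin 2) (Fin 2) ℝ) 1 0 : ℝ) : ℂ)) ^ (n-j) *
                (jfac δ z) ^ ((r:ℤ) - (n:ℤ) - 1 - ((j:ℤ)+1)) * iteratedDeriv (j+1) F (moebius δ z)) ) z := by
      intro j hj
      have hjn : j ≤ n := Nat.lt_succ_iff.mp (Finset.mem_range.mp hj)
      have h1 : HasDerivAt (fun w => (jfac δ w) ^ ((r:ℤ) - (n:ℤ) - (j:ℤ)))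
          ((((r:ℤ) - (n:ℤ) - (j:ℤ) : ℤ) : ℂ) * (jfac δ z) ^ ((r:ℤ) - (n:ℤ) - (j:ℤ) - 1) *
            ((((δ : Matrix (Fin 2) (Fin 2) ℝ) 1 0 : ℝ)) : ℂ)) z := by
        have hz1 := (hasDerivAt_zpow ((r:ℤ) - (n:ℤ) - (j:ℤ)) (jfac δ z)
          (Or.inl hJz)).comp z (jfac_hasDerivAt δ z)
        exact hz1
      have h2 := (h1.const_mul (bolK r n j *
        ((((δ : Matrix (Fin 2) (Fin 2) ℝ) 1 0 : ℝ) : ℂ)) ^ (n - j))).mul (hFder j)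
      refine h2.congr_deriv ?_
      have e1 : (r:ℤ) - (n:ℤ) - 1 - (j:ℤ) = (r:ℤ) - (n:ℤ) - (j:ℤ) - 1 := by ring
      have e2 : (r:ℤ) - (n:ℤ) - 1 - ((j:ℤ)+1) = ((r:ℤ) - (n:ℤ) - (j:ℤ)) + (-2) := by ring
      rw [e1, e2, zpow_add₀ hJz, show n+1-j = (n-j)+1 from by omega, pow_succ]
      push_cast
      ring
    have hsum := HasDerivAt.fun_sum hterm
    have hev : iteratedDeriv n (fun w => (jfac δ w) ^ r * F (moebius δ w)) =ᶠ[nhds z]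
        (fun w => ∑ j ∈ Finset.range (n+1),
          bolK r n j * ((((δ : Matrix (Fin 2) (Fin 2) ℝ) 1 0 : ℝ) : ℂ)) ^ (n - j) *
            (jfac δ w) ^ ((r : ℤ) - (n:ℤ) - (j:ℤ)) * iteratedDeriv j F (moebius δ w)) :=
      Filter.eventuallyEq_of_mem (hU.mem_nhds hz) (fun w hw => IH w hw)
    rw [iteratedDeriv_succ, hev.deriv_eq, hsum.deriv]
    -- now pure algebra on the sums
    rw [Finset.sum_add_distrib]
    conv_rhs => rw [Finset.sum_range_succ']
    have hptw : ∀ j ∈ Finset.range (n+1),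
        bolK r (n+1) (j+1) * ((((δ : Matrix (Fin 2) (Fin 2) ℝ) 1 0 : ℝ) : ℂ)) ^ (n+1-(j+1)) *
            (jfac δ z) ^ ((r : ℤ) - ((n+1 : ℕ):ℤ) - ((j+1 : ℕ):ℤ)) * iteratedDeriv (j+1) F (moebius δ z)
          = ((r:ℂ) - n - (j+1)) * bolK r n (j+1) *
              (((((δ : Matrix (Fin 2) (Fin 2) ℝ) 1 0 : ℝ) : ℂ)) ^ (n+1-(j+1)) *
                (jfac δ z) ^ ((r:ℤ) - (n:ℤ) - 1 - ((j+1:ℕ):ℤ)) * iteratedDeriv (j+1) F (moebius δ z))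
            + bolK r n j *
              (((((δ : Matrix (Fin 2) (Fin 2) ℝ) 1 0 : ℝ) : ℂ)) ^ (n-j) *
                (jfac δ z) ^ ((r:ℤ) - (n:ℤ) - 1 - ((j:ℤ)+1)) * iteratedDeriv (j+1) F (moebius δ z)) := by
      intro j hj
      have hjn : j ≤ n := Nat.lt_succ_iff.mp (Finset.mem_range.mp hj)
      rw [bolK_rec r n j hjn]
      have e1 : ((r : ℤ) - ((n+1 : ℕ):ℤ) - ((j+1 : ℕ):ℤ)) = ((r:ℤ) - (n:ℤ) - 1 - ((j+1:ℕ):ℤ)) := by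
        push_cast; ring
      have e2 : ((r:ℤ) - (n:ℤ) - 1 - ((j:ℤ)+1)) = ((r:ℤ) - (n:ℤ) - 1 - ((j+1:ℕ):ℤ)) := by
        push_cast; ring
      have e3 : n + 1 - (j+1) = n - j := by omega
      rw [e1, e2, e3]
      ring
    rw [Finset.sum_congr rfl hptw, Finset.sum_add_distrib]
    have hsplit : ∀ (Af : ℕ → ℂ), Af (n+1) = 0 →
        ∑ j ∈ Finset.range (n+1), Af j = (∑ j ∈ Finset.range (n+1), Af (j+1)) + Af 0 := by
      intro Af h0
      have h1 := Finset.sum_range_succ' Af (n+1)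
      rw [Finset.sum_range_succ, h0, add_zero] at h1
      exact h1
    rw [hsplit (fun j => ((r:ℂ) - n - j) * bolK r n j *
        (((((δ : Matrix (Fin 2) (Fin 2) ℝ) 1 0 : ℝ) : ℂ)) ^ (n+1-j) *
          (jfac δ z) ^ ((r:ℤ) - (n:ℤ) - 1 - (j:ℤ)) * iteratedDeriv j F (moebius δ z)))
      (by simp [bolK_top])]
    have hshift : ∑ j ∈ Finset.range (n+1),
        (((r:ℂ) - n - ((j+1 : ℕ):ℂ)) * bolK r n (j+1) *
          (((((δ : Matrix (Fin 2) (Fin 2) ℝ) 1 0 : ℝ) : ℂ)) ^ (n+1-(j+1)) *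
            (jfac δ z) ^ ((r:ℤ) - (n:ℤ) - 1 - ((j+1:ℕ):ℤ)) * iteratedDeriv (j+1) F (moebius δ z)))
        = ∑ j ∈ Finset.range (n+1),
        (((r:ℂ) - n - ((j:ℂ)+1)) * bolK r n (j+1) *
          (((((δ : Matrix (Fin 2) (Fin 2) ℝ) 1 0 : ℝ) : ℂ)) ^ (n+1-(j+1)) *
            (jfac δ z) ^ ((r:ℤ) - (n:ℤ) - 1 - ((j+1:ℕ):ℤ)) * iteratedDeriv (j+1) F (moebius δ z))) := by
      refine Finset.sum_congr rfl (fun j hj => ?_)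
      push_cast
      ring
    have ht0 : (((r:ℂ) - n - ((0 : ℕ):ℂ)) * bolK r n 0 *
          (((((δ : Matrix (Fin 2) (Fin 2) ℝ) 1 0 : ℝ) : ℂ)) ^ (n+1-0) *
            (jfac δ z) ^ ((r:ℤ) - (n:ℤ) - 1 - ((0:ℕ):ℤ)) * iteratedDeriv 0 F (moebius δ z)))
        = bolK r (n+1) 0 * ((((δ : Matrix (Fin 2) (Fin 2) ℝ) 1 0 : ℝ) : ℂ)) ^ (n+1-0) *
            (jfac δ z) ^ ((r:ℤ) - ((n+1 : ℕ):ℤ) - ((0:ℕ):ℤ)) * iteratedDeriv 0 F (moebius δ z) := by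
      rw [bolK_zero_rec]
      have e : (r:ℤ) - ((n+1 : ℕ):ℤ) - ((0:ℕ):ℤ) = (r:ℤ) - (n:ℤ) - 1 - ((0:ℕ):ℤ) := by
        push_cast; ring
      rw [e]
      push_cast
      ring
    rw [hshift, ht0]
    ring

lemma slash_analytic (r : ℕ) (δ : SL2) (f : ℂ → ℂ) (D : Set ℂ)
    (hJ : ∀ z ∈ D, jfac δ z ≠ 0) (hmap : ∀ z ∈ D, moebius δ z ∈ D)
    (hf : AnalyticOnNhd ℂ f D) : AnalyticOnNhd ℂ (slashNegWt r δ f) D := by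
  intro z hz
  have hjf : AnalyticAt ℂ (jfac δ) z :=
    ((analyticAt_const.mul analyticAt_id).add analyticAt_const)
  have hmo : AnalyticAt ℂ (moebius δ) z :=
    ((analyticAt_const.mul analyticAt_id).add analyticAt_const).div hjf (hJ z hz)
  have hcomp : AnalyticAt ℂ (fun w => f (moebius δ w)) z := by
    have := (hf _ (hmap z hz)).comp hmo
    exact this
  exact (hjf.pow r).mul hcomp

lemma bol (r : ℕ) (δ : SL2) (F : ℂ → ℂ) (U V : Set ℂ) (hU : IsOpen U)
    (hJ : ∀ z ∈ U, jfac δ z ≠ 0) (hmap : ∀ z ∈ U, moebius δ z ∈ V)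
    (hF : AnalyticOnNhd ℂ F V) (z : ℂ) (hz : z ∈ U) :
    iteratedDeriv (r+1) (slashNegWt r δ F) z
      = (jfac δ z) ^ ((r:ℤ) - ((r+1:ℕ):ℤ) - ((r+1:ℕ):ℤ)) * iteratedDeriv (r+1) F (moebius δ z) := by
  have h := bol_formula r δ F U V hU hJ hmap hF (r+1) z hz
  rw [show slashNegWt r δ F = (fun w => (jfac δ w) ^ r * F (moebius δ w)) from rfl, h,
    Finset.sum_range_succ]
  have hzero : ∀ j ∈ Finset.range (r+1),
      bolK r (r+1) j * ((((δ : Matrix (Fin 2) (Fin 2) ℝ) 1 0 : ℝ) : ℂ)) ^ (r+1-j) *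
        (jfac δ z) ^ ((r:ℤ) - ((r+1:ℕ):ℤ) - (j:ℤ)) * iteratedDeriv j F (moebius δ z) = 0 := by
    intro j hj
    have hmem : r ∈ Finset.Ico j (r+1) :=
      Finset.mem_Ico.mpr ⟨Nat.lt_succ_iff.mp (Finset.mem_range.mp hj), Nat.lt_succ_self r⟩
    have : bolK r (r+1) j = 0 := by
      rw [bolK, Finset.prod_eq_zero hmem (by simp), mul_zero]
    simp [this]
  rw [Finset.sum_eq_zero hzero, zero_add]
  simp [bolK, Finset.Ico_self]

lemma slash_mul (r : ℕ) (δ₁ δ₂ : SL2) (f : ℂ → ℂ) (z : ℂ) (h : jfac δ₂ z ≠ 0) :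
    slashNegWt r (δ₁ * δ₂) f z = slashNegWt r δ₂ (slashNegWt r δ₁ f) z := by
  simp only [slashNegWt, jfac_mul δ₁ δ₂ z h, moebius_mul δ₁ δ₂ z h, mul_pow]
  ring


/-- The maps `ρ_r(γ) : f ↦ f|₋ᵣγ⁻¹` are ℂ-linear bijections of `V_r(D)` onto itself and
give a representation of `Γ` on `V_r(D)`. -/
theorem slash_representation_on_solution_space
    (Γ : Subgroup (Matrix.SpecialLinearGroup (Fin 2) ℝ)) (r : ℕ)
    (D : Set ℂ) (hDo : IsOpen D) (hDH : D ⊆ {z : ℂ | 0 < z.im})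
    (hstab : ∀ γ : Γ, ∀ z ∈ D, moebius γ z ∈ D)
    (g : ℂ → ℂ) (hg : AnalyticOnNhd ℂ g D)
    (hauto : ∀ γ : Γ, ∀ z ∈ D, g (moebius γ z) = (jfac γ z) ^ (2 * (r + 1)) * g z) :
    (∀ γ : Γ,
      -- `ρ_r(γ)` maps `V_r(D)` into itself
      (∀ f : ℂ → ℂ, MemSolSpace r D g f → MemSolSpace r D g (slashNegWt r ↑(γ⁻¹) f)) ∧
      -- `ρ_r(γ)` is ℂ-linear
      (∀ f₁ f₂ : ℂ → ℂ, ∀ c : ℂ, ∀ z ∈ D,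
        slashNegWt r ↑(γ⁻¹) (fun w => c * f₁ w + f₂ w) z =
          c * slashNegWt r ↑(γ⁻¹) f₁ z + slashNegWt r ↑(γ⁻¹) f₂ z) ∧
      -- `ρ_r(γ)` is surjective from `V_r(D)` onto `V_r(D)` (as functions on `D`)
      (∀ f : ℂ → ℂ, MemSolSpace r D g f → ∃ f' : ℂ → ℂ, MemSolSpace r D g f' ∧
        ∀ z ∈ D, slashNegWt r ↑(γ⁻¹) f' z = f z) ∧
      -- `ρ_r(γ)` is injective on `V_r(D)` (as functions on `D`)
      (∀ f₁ f₂ : ℂ → ℂ, MemSolSpace r D g f₁ → MemSolSpace r D g f₂ →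
        (∀ z ∈ D, slashNegWt r ↑(γ⁻¹) f₁ z = slashNegWt r ↑(γ⁻¹) f₂ z) →
        ∀ z ∈ D, f₁ z = f₂ z)) ∧
    -- `γ ↦ ρ_r(γ)` is a group homomorphism
    (∀ γ₁ γ₂ : Γ, ∀ f : ℂ → ℂ, ∀ z ∈ D,
      slashNegWt r ↑((γ₁ * γ₂)⁻¹) f z =
        slashNegWt r ↑(γ₁⁻¹) (slashNegWt r ↑(γ₂⁻¹) f) z) := by
  have hinv : ∀ γ : Γ, ((γ⁻¹ : Γ) : SL2) = ((γ : SL2))⁻¹ := fun _ => rfl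
  -- main invariance of the solution space
  have hmem : ∀ γ : Γ, ∀ f : ℂ → ℂ, MemSolSpace r D g f →
      MemSolSpace r D g (slashNegWt r ↑(γ⁻¹) f) := by
    intro γ f hf
    set δ : SL2 := ((γ⁻¹ : Γ) : SL2) with hδ
    have hJ : ∀ z ∈ D, jfac δ z ≠ 0 := fun z hz => jfac_ne_zero δ (hDH hz)
    have hmap : ∀ z ∈ D, moebius δ z ∈ D := hstab γ⁻¹
    refine ⟨slash_analytic r δ f D hJ hmap hf.1, ?_⟩
    intro z hz
    have hJz : jfac δ z ≠ 0 := hJ z hz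
    have hw : moebius δ z ∈ D := hmap z hz
    have hb := bol r δ f D D hDo hJ hmap hf.1 z hz
    rw [hb]
    have hδ' : δ = ((γ : SL2))⁻¹ := rfl
    have hcomp : moebius ↑γ (moebius δ z) = z := by
      conv_lhs => rw [hδ']
      rw [← moebius_mul _ _ z (hδ' ▸ hJz), mul_inv_cancel, moebius_one]
    have hjj : jfac ↑γ (moebius δ z) * jfac δ z = 1 := by
      conv_lhs => rw [hδ']
      rw [← jfac_mul _ _ z (hδ' ▸ hJz), mul_inv_cancel, jfac_one]
    have hJinv : jfac ↑γ (moebius δ z) = (jfac δ z)⁻¹ := by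
      exact eq_inv_of_mul_eq_one_left hjj
    have hgz : g z = (jfac δ z)⁻¹ ^ (2*(r+1)) * g (moebius δ z) := by
      have h := hauto γ (moebius δ z) hw
      rw [hcomp, hJinv] at h
      exact h
    have hze : (jfac δ z)⁻¹ ^ (2*(r+1)) * (jfac δ z) ^ r
        = (jfac δ z) ^ ((r:ℤ) - ((r+1:ℕ):ℤ) - ((r+1:ℕ):ℤ)) := by
      rw [inv_pow, ← zpow_natCast (jfac δ z) (2*(r+1)), ← zpow_neg,
        ← zpow_natCast (jfac δ z) r, ← zpow_add₀ hJz]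
      congr 1
      push_cast
      ring
    have hode := hf.2 _ hw
    rw [show slashNegWt r δ f z = jfac δ z ^ r * f (moebius δ z) from rfl, hgz]
    linear_combination (g (moebius δ z) * f (moebius δ z)) * hze
      + ((jfac δ z) ^ ((r:ℤ) - ((r+1:ℕ):ℤ) - ((r+1:ℕ):ℤ))) * hode
  refine ⟨fun γ => ⟨hmem γ, ?_, ?_, ?_⟩, ?_⟩
  · -- linearity
    intro f₁ f₂ c z hz
    simp only [slashNegWt]
    ring
  · -- surjectivity
    intro f hf
    refine ⟨slashNegWt r (↑γ : SL2) f, ?_, ?_⟩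
    · have := hmem γ⁻¹ f hf
      rwa [inv_inv] at this
    · intro z hz
      have hJz : jfac ((γ:SL2))⁻¹ z ≠ 0 := by
        rw [← hinv γ]; exact jfac_ne_zero _ (hDH hz)
      rw [hinv γ, ← slash_mul r (↑γ) ((↑γ : SL2))⁻¹ f z hJz, mul_inv_cancel]
      simp [slashNegWt, jfac_one, moebius_one]
  · -- injectivity
    intro f₁ f₂ hf₁ hf₂ heq z hz
    have hw : moebius ↑γ z ∈ D := hstab γ z hz
    have hJz : jfac ↑γ z ≠ 0 := jfac_ne_zero _ (hDH hz)
    have hJw : jfac ((γ:SL2))⁻¹ (moebius ↑γ z) ≠ 0 := jfac_ne_zero _ (hDH hw)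
    have hcomp : moebius ((γ:SL2))⁻¹ (moebius ↑γ z) = z := by
      rw [← moebius_mul _ _ z hJz, inv_mul_cancel, moebius_one]
    have h := heq _ hw
    rw [hinv γ] at h
    simp only [slashNegWt, hcomp] at h
    exact mul_left_cancel₀ (pow_ne_zero r hJw) h
  · -- group homomorphism
    intro γ₁ γ₂ f z hz
    have hJz : jfac ((γ₁:SL2))⁻¹ z ≠ 0 := jfac_ne_zero _ (hDH hz)
    have hco : (((γ₁ * γ₂)⁻¹ : Γ) : SL2) = ((γ₂:SL2))⁻¹ * ((γ₁:SL2))⁻¹ := by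
      rw [show (((γ₁ * γ₂)⁻¹ : Γ) : SL2) = (((γ₁:SL2)) * ((γ₂:SL2)))⁻¹ from rfl, mul_inv_rev]
    rw [hco, slash_mul r _ _ f z hJz, hinv γ₁, hinv γ₂]
end
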